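/- Let B be a totally sign-skew-symmetric n×n integer matrix satisfying the Assumption. Then every G-matrix of B is row sign-coherent: for every finite sequence w of mutation indices, each row of G_w^B is nonzero and has either all entries ≥ 0 or all entries ≤ 0. -/

import Mathlib

open Matrix

/-- Mutation of an integer matrix at index `k`. -/
def mutB {n : ℕ} (B : Matrix (Fin n) (Fin n) ℤ) (k : Fin n) : Matrix (Fin n) (Fin n) ℤ :=
  Matrix.of fun i j =>
    if i = k ∨ j = k then -B i j
    else B i j + (B i k).sign * max (B i k * B k j) 0

/-- Sign-skew-symmetric matrix. -/
def SignSkew {n : ℕ} (B : Matrix (Fin n) (Fin n) ℤ) : Prop :=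
  ∀ i j, B i j * B j i ≤ 0 ∧ (B i j * B j i = 0 → B i j = 0 ∧ B j i = 0)

/-- Entrywise positive part `[A]₊`. -/
def matPos {n : ℕ} (A : Matrix (Fin n) (Fin n) ℤ) : Matrix (Fin n) (Fin n) ℤ :=
  Matrix.of fun i j => max (A i j) 0

/-- `A^{k·}`: agrees with `A` in row `k`, zero elsewhere. -/
def rowSel {n : ℕ} (A : Matrix (Fin n) (Fin n) ℤ) (k : Fin n) : Matrix (Fin n) (Fin n) ℤ :=
  Matrix.of fun i j => if i = k then A i j else 0

/-- `A^{·k}`: agrees with `A` in column `k`, zero elsewhere. -/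
def colSel {n : ℕ} (A : Matrix (Fin n) (Fin n) ℤ) (k : Fin n) : Matrix (Fin n) (Fin n) ℤ :=
  Matrix.of fun i j => if j = k then A i j else 0

/-- `J_k`: identity matrix with the `(k,k)` entry replaced by `-1`. -/
def Jmat (n : ℕ) (k : Fin n) : Matrix (Fin n) (Fin n) ℤ :=
  Matrix.of fun i j => if i = j then (if i = k then -1 else 1) else 0

/-- One mutation step on a triple `(B_w, C_w, G_w)`, with fixed initial matrix `B0`:
`B_{w·k} = μ_k(B_w)`, `C_{w·k} = C_w (J_k + [B_w]₊^{k·}) + [-C_w]₊^{·k} B_w`,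
`G_{w·k} = G_w (J_k + [-B_w]₊^{·k}) - B0 [-C_w]₊^{·k}`. -/
def BCGstep {n : ℕ} (B0 : Matrix (Fin n) (Fin n) ℤ)
    (s : Matrix (Fin n) (Fin n) ℤ × Matrix (Fin n) (Fin n) ℤ × Matrix (Fin n) (Fin n) ℤ)
    (k : Fin n) :
    Matrix (Fin n) (Fin n) ℤ × Matrix (Fin n) (Fin n) ℤ × Matrix (Fin n) (Fin n) ℤ :=
  (mutB s.1 k,
   s.2.1 * (Jmat n k + rowSel (matPos s.1) k) + colSel (matPos (-s.2.1)) k * s.1,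
   s.2.2 * (Jmat n k + colSel (matPos (-s.1)) k) - B0 * colSel (matPos (-s.2.1)) k)

/-- The triple `(B_w, C_w, G_w)` associated to a mutation sequence `w`
(entries of `w` are applied from left to right). -/
def BCG {n : ℕ} (B : Matrix (Fin n) (Fin n) ℤ) (w : List (Fin n)) :
    Matrix (Fin n) (Fin n) ℤ × Matrix (Fin n) (Fin n) ℤ × Matrix (Fin n) (Fin n) ℤ :=
  w.foldl (BCGstep B) (B, 1, 1)

/-- The exchange matrix `B_w` of `B` at the sequence `w`. -/
def Bmat {n : ℕ} (B : Matrix (Fin n) (Fin n) ℤ) (w : List (Fin n)) :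
    Matrix (Fin n) (Fin n) ℤ := (BCG B w).1

/-- The `C`-matrix `C_w^B`. -/
def Cmat {n : ℕ} (B : Matrix (Fin n) (Fin n) ℤ) (w : List (Fin n)) :
    Matrix (Fin n) (Fin n) ℤ := (BCG B w).2.1

/-- The `G`-matrix `G_w^B`. -/
def Gmat {n : ℕ} (B : Matrix (Fin n) (Fin n) ℤ) (w : List (Fin n)) :
    Matrix (Fin n) (Fin n) ℤ := (BCG B w).2.2

/-- Totally sign-skew-symmetric: every matrix obtained from `B` by a finite sequence of
mutations is sign-skew-symmetric. -/
def TotSSS {n : ℕ} (B : Matrix (Fin n) (Fin n) ℤ) : Prop :=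
  ∀ w : List (Fin n), SignSkew (Bmat B w)

/-- The `j`-th column of `A` is sign-coherent with sign `ε`. -/
def ColHasSign {n : ℕ} (A : Matrix (Fin n) (Fin n) ℤ) (j : Fin n) (ε : ℤ) : Prop :=
  (∃ i, A i j ≠ 0) ∧ ((ε = 1 ∧ ∀ i, 0 ≤ A i j) ∨ (ε = -1 ∧ ∀ i, A i j ≤ 0))

/-- The `j`-th column of `A` is sign-coherent. -/
def ColSignCoherent {n : ℕ} (A : Matrix (Fin n) (Fin n) ℤ) (j : Fin n) : Prop :=
  ∃ ε : ℤ, ColHasSign A j ε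

/-- The `i`-th row of `A` is sign-coherent with sign `ε`. -/
def RowHasSign {n : ℕ} (A : Matrix (Fin n) (Fin n) ℤ) (i : Fin n) (ε : ℤ) : Prop :=
  (∃ j, A i j ≠ 0) ∧ ((ε = 1 ∧ ∀ j, 0 ≤ A i j) ∨ (ε = -1 ∧ ∀ j, A i j ≤ 0))

/-- The **Assumption**: for every matrix `B₀` obtained from `B` or `-B` by a finite
sequence of mutations, every sequence `w` and every index `k`, the `k`-th columns of
`C_w^{B₀}` and `C_w^{-B₀ᵀ}` are both sign-coherent with the same sign. -/
def TheAssumption {n : ℕ} (B : Matrix (Fin n) (Fin n) ℤ) : Prop :=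
  ∀ B0 : Matrix (Fin n) (Fin n) ℤ,
    ((∃ v : List (Fin n), B0 = Bmat B v) ∨ (∃ v : List (Fin n), B0 = Bmat (-B) v)) →
    ∀ (w : List (Fin n)) (k : Fin n),
      ∃ ε : ℤ, ColHasSign (Cmat B0 w) k ε ∧ ColHasSign (Cmat (-B0ᵀ) w) k ε


namespace SSSAux

open Matrix

variable {n : ℕ}

abbrev Mat (n : ℕ) := Matrix (Fin n) (Fin n) ℤ

/-- `E k = Matrix.single k k 1`. -/
def Ek (k : Fin n) : Mat n := Matrix.single k k (1 : ℤ)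

/-! ### Integer lemmas -/

lemma int_sgn_max (x y : ℤ) :
    x.sign * max (x*y) 0 = max x 0 * max y 0 - max (-x) 0 * max (-y) 0 := by
  rcases lt_trichotomy x 0 with hx | hx | hx <;>
    rcases lt_trichotomy y 0 with hy | hy | hy
  · have h1 : (0:ℤ) < x * y := mul_pos_of_neg_of_neg hx hy
    rw [Int.sign_eq_neg_one_of_neg hx, max_eq_left h1.le,
      max_eq_right hx.le, max_eq_left (by omega : (0:ℤ) ≤ -x),
      max_eq_left (by omega : (0:ℤ) ≤ -y)]
    ring
  · subst hy; simp
  · have h1 : x * y < 0 := mul_neg_of_neg_of_pos hx hy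
    rw [Int.sign_eq_neg_one_of_neg hx, max_eq_right h1.le,
      max_eq_right hx.le, max_eq_left (by omega : (0:ℤ) ≤ -x),
      max_eq_right (by omega : -y ≤ (0:ℤ))]
    ring
  · subst hx; simp
  · subst hx; simp
  · subst hx; simp
  · have h1 : x * y < 0 := mul_neg_of_pos_of_neg hx hy
    rw [Int.sign_eq_one_of_pos hx, max_eq_right h1.le,
      max_eq_left hx.le, max_eq_right hy.le, max_eq_right (by omega : -x ≤ (0:ℤ)),
      max_eq_left (by omega : (0:ℤ) ≤ -y)]
    ring
  · subst hy; simp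
  · have h1 : (0:ℤ) < x * y := mul_pos hx hy
    rw [Int.sign_eq_one_of_pos hx, max_eq_left h1.le,
      max_eq_left hx.le, max_eq_left hy.le,
      max_eq_right (by omega : -x ≤ (0:ℤ))]
    ring

lemma int_max_sub_self (x : ℤ) : max x 0 - x = max (-x) 0 := by
  rcases le_total x 0 with h | h
  · rw [max_eq_right h, max_eq_left (by omega)]; ring
  · rw [max_eq_left h, max_eq_right (by omega)]; ring

lemma int_max_sub_max (x : ℤ) : max x 0 - max (-x) 0 = x := by
  rcases le_total x 0 with h | h
  · rw [max_eq_right h, max_eq_left (by omega)]; ring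
  · rw [max_eq_left h, max_eq_right (by omega)]; ring

/-! ### Entry lemmas for the basic definitions -/

lemma mutB_apply (B : Mat n) (k i j : Fin n) :
    mutB B k i j = if i = k ∨ j = k then -B i j
      else B i j + (B i k).sign * max (B i k * B k j) 0 := rfl

lemma matPos_apply (A : Mat n) (i j : Fin n) : matPos A i j = max (A i j) 0 := rfl

lemma rowSel_apply (A : Mat n) (k i j : Fin n) :
    rowSel A k i j = if i = k then A i j else 0 := rfl

lemma colSel_apply (A : Mat n) (k i j : Fin n) :
    colSel A k i j = if j = k then A i j else 0 := rfl

lemma Jmat_apply (k i j : Fin n) :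
    Jmat n k i j = if i = j then (if i = k then -1 else 1) else 0 := rfl

lemma Ek_apply (k i j : Fin n) :
    Ek k i j = if i = k ∧ j = k then 1 else 0 := by
  simp only [Ek, Matrix.single, of_apply]
  rcases eq_or_ne i k with h1 | h1
  · rcases eq_or_ne j k with h2 | h2
    · simp [h1, h2]
    · simp [h1, h2, Ne.symm h2]
  · simp [h1, Ne.symm h1]

lemma Jmat_eq (k : Fin n) : Jmat n k = 1 - 2 • Ek k := by
  ext i j
  simp only [Jmat_apply, Matrix.sub_apply, Matrix.smul_apply, Ek_apply, one_apply, smul_eq_mul]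
  by_cases h1 : i = j <;> by_cases h2 : i = k <;> by_cases h3 : j = k <;>
    first
    | (simp [h1, h2, h3]; omega)
    | simp_all

/-! ### Products with selection matrices, entrywise -/

lemma Ek_mul_apply (k : Fin n) (X : Mat n) (i j : Fin n) :
    (Ek k * X) i j = if i = k then X k j else 0 := by
  simp only [mul_apply, Ek_apply]
  rcases eq_or_ne i k with hik | hik
  · rw [if_pos hik, Finset.sum_eq_single k]
    · simp [hik]
    · intro b _ hb; simp [hb]
    · simp
  · rw [if_neg hik]
    apply Finset.sum_eq_zero; intro b _; simp [hik]

lemma mul_Ek_apply (k : Fin n) (X : Mat n) (i j : Fin n) :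
    (X * Ek k) i j = if j = k then X i k else 0 := by
  simp only [mul_apply, Ek_apply]
  rcases eq_or_ne j k with hjk | hjk
  · rw [if_pos hjk, Finset.sum_eq_single k]
    · simp [hjk]
    · intro b _ hb; simp [hb]
    · simp
  · rw [if_neg hjk]
    apply Finset.sum_eq_zero; intro b _; simp [hjk]

lemma rowSel_eq (A : Mat n) (k : Fin n) : rowSel A k = Ek k * A := by
  ext i j; rw [Ek_mul_apply, rowSel_apply]
  by_cases h : i = k
  · rw [if_pos h, if_pos h, h]
  · rw [if_neg h, if_neg h]

lemma colSel_eq (A : Mat n) (k : Fin n) : colSel A k = A * Ek k := by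
  ext i j; rw [mul_Ek_apply, colSel_apply]
  by_cases h : j = k
  · rw [if_pos h, if_pos h, h]
  · rw [if_neg h, if_neg h]

lemma J_mul_apply (k : Fin n) (X : Mat n) (i j : Fin n) :
    (Jmat n k * X) i j = if i = k then -X k j else X i j := by
  rw [Jmat_eq, sub_mul, one_mul, smul_mul_assoc]
  simp only [Matrix.sub_apply, Matrix.smul_apply, Ek_mul_apply, smul_eq_mul]
  by_cases h : i = k <;> simp [h] <;> ring

lemma mul_J_apply (k : Fin n) (X : Mat n) (i j : Fin n) :
    (X * Jmat n k) i j = if j = k then -X i k else X i j := by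
  rw [Jmat_eq, mul_sub, mul_one, mul_smul_comm]
  simp only [Matrix.sub_apply, Matrix.smul_apply, mul_Ek_apply, smul_eq_mul]
  by_cases h : j = k <;> simp [h] <;> ring

/-! ### Transposes -/

lemma matPos_transpose (A : Mat n) : (matPos A)ᵀ = matPos Aᵀ := by
  ext i j; simp [matPos_apply, transpose_apply]

lemma rowSel_transpose (A : Mat n) (k : Fin n) : (rowSel A k)ᵀ = colSel Aᵀ k := by
  ext i j; simp [rowSel_apply, colSel_apply, transpose_apply]

lemma colSel_transpose (A : Mat n) (k : Fin n) : (colSel A k)ᵀ = rowSel Aᵀ k := by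
  ext i j; simp [rowSel_apply, colSel_apply, transpose_apply]

lemma Jmat_transpose (k : Fin n) : (Jmat n k)ᵀ = Jmat n k := by
  ext i j
  simp only [Jmat_apply, transpose_apply]
  rcases eq_or_ne i j with h | h
  · subst h; simp
  · simp [h, Ne.symm h]

lemma matPos_neg_neg_smul (σ : ℤ) (A : Mat n) (h : σ = -1) :
    matPos (-σ • A) = matPos A := by subst h; ext i j; simp [matPos_apply]

lemma matPos_neg_one_smul (σ : ℤ) (A : Mat n) (h : σ = 1) :
    matPos (-σ • A) = matPos (-A) := by subst h; ext i j; simp [matPos_apply]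

end SSSAux

namespace SSSAux

open Matrix

variable {n : ℕ}

lemma int_sgn_max' (x y : ℤ) :
    x * max y 0 + max (-x) 0 * y = x.sign * max (x*y) 0 := by
  rw [int_sgn_max]
  rcases le_total x 0 with hx | hx <;> rcases le_total y 0 with hy | hy
  · rw [max_eq_right hy, max_eq_right hx, max_eq_left (by omega : (0:ℤ) ≤ -x),
      max_eq_left (by omega : (0:ℤ) ≤ -y)]
    ring
  · rw [max_eq_left hy, max_eq_right hx, max_eq_left (by omega : (0:ℤ) ≤ -x),
      max_eq_right (by omega : -y ≤ (0:ℤ))]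
    ring
  · rw [max_eq_right hy, max_eq_left hx, max_eq_right (by omega : -x ≤ (0:ℤ)),
      max_eq_left (by omega : (0:ℤ) ≤ -y)]
    ring
  · rw [max_eq_left hy, max_eq_left hx, max_eq_right (by omega : -x ≤ (0:ℤ)),
      max_eq_right (by omega : -y ≤ (0:ℤ))]
    ring

/-! ### E-calculus -/

lemma E_mul_E (k : Fin n) : Ek k * Ek k = Ek k := by
  ext i j; rw [Ek_mul_apply]
  by_cases h : i = k <;> simp [Ek_apply, h]

lemma E_mul_mul_E' (l m : Fin n) (X : Mat n) :
    Ek l * X * Ek m = X l m • Matrix.single l m (1:ℤ) := by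
  ext i j
  rw [mul_Ek_apply, Ek_mul_apply]
  rcases eq_or_ne i l with h1 | h1
  · rcases eq_or_ne j m with h2 | h2
    · simp [Matrix.single, h1, h2]
    · simp [Matrix.single, h1, h2, Ne.symm h2]
  · simp [Matrix.single, h1, Ne.symm h1]

lemma E_mul_mul_E (k : Fin n) (X : Mat n) : Ek k * X * Ek k = X k k • Ek k := by
  rw [E_mul_mul_E']; rfl

lemma J_mul_J (k : Fin n) : Jmat n k * Jmat n k = 1 := by
  ext i j
  rw [J_mul_apply]
  by_cases h1 : i = k
  · simp only [h1, if_true, Jmat_apply, one_apply]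
    by_cases h2 : k = j <;> simp [h2]
  · simp only [h1, if_false, Jmat_apply, one_apply, if_neg h1]

lemma E_mul_J (k : Fin n) : Ek k * Jmat n k = -Ek k := by
  ext i j
  rw [mul_J_apply, Ek_apply, Matrix.neg_apply, Ek_apply]
  by_cases h1 : i = k <;> by_cases h2 : j = k <;> simp [h1, h2]

lemma J_mul_E (k : Fin n) : Jmat n k * Ek k = -Ek k := by
  ext i j
  rw [J_mul_apply, Ek_apply, Matrix.neg_apply, Ek_apply]
  by_cases h1 : i = k <;> by_cases h2 : j = k <;> simp [h1, h2]

lemma mul_Ek_mul_apply (k : Fin n) (X W : Mat n) (i j : Fin n) :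
    (X * (Ek k * W)) i j = X i k * W k j := by
  rw [mul_apply, Finset.sum_eq_single k]
  · rw [Ek_mul_apply]; simp
  · intro b _ hb; rw [Ek_mul_apply]; simp [hb]
  · simp

/-- `E_k (J_k + Y E_k) = -E_k` when `Y k k = 0`. -/
lemma E_mul_EL (k : Fin n) (Y : Mat n) (hY : Y k k = 0) :
    Ek k * (Jmat n k + Y * Ek k) = -Ek k := by
  rw [mul_add, E_mul_J, ← mul_assoc, E_mul_mul_E' k k, hY]
  simp

/-- `(J_k + Y E_k)² = 1` when `Y k k = 0`. -/
lemma EL_sq (k : Fin n) (Y : Mat n) (hY : Y k k = 0) :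
    (Jmat n k + Y * Ek k) * (Jmat n k + Y * Ek k) = 1 := by
  have h2 : Ek k * (Y * Ek k) = (0:ℤ) • Ek k := by
    rw [← mul_assoc, E_mul_mul_E' k k, hY]; rfl
  have h1 : Jmat n k * (Y * Ek k) = Y * Ek k := by
    rw [Jmat_eq, sub_mul, one_mul, smul_mul_assoc, h2]
    simp
  have h3 : (Y * Ek k) * Jmat n k = -(Y * Ek k) := by
    rw [mul_assoc, E_mul_J, mul_neg]
  have h4 : (Y * Ek k) * (Y * Ek k) = 0 := by
    rw [mul_assoc, h2]
    simp
  rw [add_mul, mul_add, mul_add, J_mul_J, h1, h3, h4]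
  simp

/-! ### mutB structure -/

lemma mutB_neg (M : Mat n) (k : Fin n) : mutB (-M) k = -(mutB M k) := by
  ext i j
  simp only [mutB_apply, Matrix.neg_apply]
  by_cases h : i = k ∨ j = k
  · simp [h]
  · rw [if_neg h, if_neg h, neg_mul_neg, Int.sign_neg, neg_mul]
    ring

lemma mutB_transpose (M : Mat n) (k : Fin n) : mutB Mᵀ k = (mutB M k)ᵀ := by
  ext i j
  simp only [mutB_apply, transpose_apply]
  by_cases h : i = k ∨ j = k
  · rw [if_pos h, if_pos (Or.symm h)]
  · rw [if_neg h, if_neg (fun hh => h (Or.symm hh))]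
    rw [int_sgn_max, int_sgn_max]
    ring

lemma mutB_mutB (M : Mat n) (k : Fin n) : mutB (mutB M k) k = M := by
  ext i j
  by_cases h : i = k ∨ j = k
  · simp [mutB_apply, h]
  · have h1 : ¬ i = k := fun hh => h (Or.inl hh)
    have h2 : ¬ j = k := fun hh => h (Or.inr hh)
    simp only [mutB_apply, h1, h2, or_self, if_false, or_true, true_or, if_true,
      false_or, or_false]
    rw [neg_mul_neg, Int.sign_neg, neg_mul]
    ring

lemma mutB_negT (M : Mat n) (k : Fin n) : mutB (-Mᵀ) k = -(mutB M k)ᵀ := by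
  rw [show (-Mᵀ) = (-M)ᵀ by ext i j; simp, mutB_transpose, mutB_neg]
  ext i j; simp

/-- Diagonal of a sign-skew-symmetric matrix vanishes. -/
lemma SignSkew.diagZero {M : Mat n} (h : SignSkew M) (k : Fin n) : M k k = 0 := by
  have h1 := (h k k).1
  have h2 := (h k k).2
  nlinarith [h2 (by nlinarith), sq_nonneg (M k k)]

lemma SignSkew.neg {M : Mat n} (h : SignSkew M) : SignSkew (-M) := by
  intro i j
  have := h i j
  constructor
  · simp only [Matrix.neg_apply]; nlinarith [this.1]
  · intro hz
    have : M i j = 0 ∧ M j i = 0 := this.2 (by simp only [Matrix.neg_apply] at hz; nlinarith)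
    simp [Matrix.neg_apply, this.1, this.2]

lemma SignSkew.transpose {M : Mat n} (h : SignSkew M) : SignSkew Mᵀ := by
  intro i j
  have := h j i
  constructor
  · simp only [transpose_apply]; nlinarith [this.1]
  · intro hz
    have : M j i = 0 ∧ M i j = 0 := this.2 (by simp only [transpose_apply] at hz; nlinarith)
    simp [transpose_apply, this.1, this.2]

lemma SignSkew.negT {M : Mat n} (h : SignSkew M) : SignSkew (-Mᵀ) :=
  SignSkew.neg (SignSkew.transpose h)

/-- Factorization of mutation: `μ_k(W) = (J + [-W]₊ E_k) W (J + E_k [W]₊)` when `W k k = 0`. -/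
lemma mutB_factor (W : Mat n) (k : Fin n) (hd : W k k = 0) :
    mutB W k = (Jmat n k + matPos (-W) * Ek k) * W * (Jmat n k + Ek k * matPos W) := by
  have hU : ∀ i j, ((Jmat n k + matPos (-W) * Ek k) * W) i j
      = (if i = k then -W k j else W i j) + max (-W i k) 0 * W k j := by
    intro i j
    rw [add_mul, Matrix.add_apply, J_mul_apply, mul_assoc, mul_Ek_mul_apply]
    rw [matPos_apply, Matrix.neg_apply]
  ext i j
  rw [mul_add, Matrix.add_apply, mul_J_apply, mul_Ek_mul_apply, hU, hU, matPos_apply, mutB_apply]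
  by_cases h2 : j = k
  · rw [h2]
    by_cases h1 : i = k
    · rw [h1]; simp [hd]
    · simp [h1, hd]
  · by_cases h1 : i = k
    · rw [h1]; simp [h2, hd]
    · simp only [h1, h2, if_false, or_self, if_neg h2]
      rw [hd, ← int_sgn_max']
      ring

end SSSAux

namespace SSSAux

open Matrix

variable {n : ℕ}

/-! ### Unfolding the recursions -/

lemma BCG_nil (M : Mat n) : BCG M [] = (M, 1, 1) := rfl

lemma BCG_append (M : Mat n) (w : List (Fin n)) (k : Fin n) :
    BCG M (w ++ [k]) = BCGstep M (BCG M w) k := by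
  simp [BCG]

lemma Bmat_nil (M : Mat n) : Bmat M [] = M := rfl
lemma Cmat_nil (M : Mat n) : Cmat M [] = 1 := rfl
lemma Gmat_nil (M : Mat n) : Gmat M [] = 1 := rfl

lemma BCG_fst (M : Mat n) (w : List (Fin n)) :
    ∀ s : Mat n × Mat n × Mat n, (w.foldl (BCGstep M) s).1 = w.foldl mutB s.1 := by
  induction w with
  | nil => intro s; rfl
  | cons k w ih => intro s; exact ih _

lemma Bmat_foldl (M : Mat n) (w : List (Fin n)) : Bmat M w = w.foldl mutB M :=
  BCG_fst M w _

lemma Bmat_append (M : Mat n) (w : List (Fin n)) (k : Fin n) :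
    Bmat M (w ++ [k]) = mutB (Bmat M w) k := by
  simp [Bmat_foldl]

lemma Bmat_cons (M : Mat n) (k : Fin n) (w : List (Fin n)) :
    Bmat M (k :: w) = Bmat (mutB M k) w := by
  simp [Bmat_foldl]

lemma Bmat_app (M : Mat n) (u v : List (Fin n)) :
    Bmat M (u ++ v) = Bmat (Bmat M u) v := by
  simp [Bmat_foldl]

lemma Cmat_append (M : Mat n) (w : List (Fin n)) (k : Fin n) :
    Cmat M (w ++ [k]) = Cmat M w * (Jmat n k + Ek k * matPos (Bmat M w))
      + matPos (-(Cmat M w)) * Ek k * Bmat M w := by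
  have : Cmat M (w ++ [k]) = (BCGstep M (BCG M w) k).2.1 := by
    rw [Cmat, BCG_append]
  rw [this, BCGstep]
  rw [show (BCG M w).2.1 = Cmat M w from rfl, show (BCG M w).1 = Bmat M w from rfl]
  rw [rowSel_eq, colSel_eq]

lemma Gmat_append (M : Mat n) (w : List (Fin n)) (k : Fin n) :
    Gmat M (w ++ [k]) = Gmat M w * (Jmat n k + matPos (-(Bmat M w)) * Ek k)
      - M * (matPos (-(Cmat M w)) * Ek k) := by
  have : Gmat M (w ++ [k]) = (BCGstep M (BCG M w) k).2.2 := by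
    rw [Gmat, BCG_append]
  rw [this, BCGstep]
  rw [show (BCG M w).2.1 = Cmat M w from rfl, show (BCG M w).1 = Bmat M w from rfl,
    show (BCG M w).2.2 = Gmat M w from rfl]
  rw [colSel_eq, colSel_eq, mul_assoc]

lemma Bmat_neg (M : Mat n) (w : List (Fin n)) : Bmat (-M) w = -Bmat M w := by
  induction w using List.reverseRecOn with
  | nil => rfl
  | append_singleton w k ih => rw [Bmat_append, Bmat_append, ih, mutB_neg]

lemma Bmat_transpose (M : Mat n) (w : List (Fin n)) : Bmat Mᵀ w = (Bmat M w)ᵀ := by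
  induction w using List.reverseRecOn with
  | nil => rfl
  | append_singleton w k ih => rw [Bmat_append, Bmat_append, ih, mutB_transpose]

lemma Bmat_negT (M : Mat n) (w : List (Fin n)) : Bmat (-Mᵀ) w = -(Bmat M w)ᵀ := by
  rw [show -Mᵀ = (-M)ᵀ by ext i j; simp, Bmat_transpose, Bmat_neg]
  ext i j; simp

lemma Bmat_reverse (M : Mat n) (w : List (Fin n)) :
    Bmat (Bmat M w) w.reverse = M := by
  induction w generalizing M with
  | nil => rfl
  | cons k w ih =>
    rw [List.reverse_cons, Bmat_cons, Bmat_app, ih,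
      show Bmat (mutB M k) [k] = mutB (mutB M k) k from rfl, mutB_mutB]

/-! ### The mutation class -/

/-- The class of matrices obtained from `±B` by mutation, together with the
negative transposes of such matrices. -/
def InCl (B M : Mat n) : Prop :=
  ∃ u : List (Fin n), M = Bmat B u ∨ M = Bmat (-B) u
    ∨ M = -(Bmat B u)ᵀ ∨ M = -(Bmat (-B) u)ᵀ

lemma InCl_self (B : Mat n) : InCl B B := ⟨[], Or.inl rfl⟩

lemma InCl_Bmat {B M : Mat n} (h : InCl B M) (w : List (Fin n)) : InCl B (Bmat M w) := by
  obtain ⟨u, h | h | h | h⟩ := h <;> subst h <;> refine ⟨u ++ w, ?_⟩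
  · exact Or.inl (by rw [Bmat_app])
  · exact Or.inr (Or.inl (by rw [Bmat_app]))
  · refine Or.inr (Or.inr (Or.inl ?_))
    rw [Bmat_negT, Bmat_app]
  · refine Or.inr (Or.inr (Or.inr ?_))
    rw [Bmat_negT, Bmat_app]

lemma InCl_mutB {B M : Mat n} (h : InCl B M) (k : Fin n) : InCl B (mutB M k) := by
  have := InCl_Bmat h [k]
  simpa [Bmat_foldl] using this

lemma InCl_negT {B M : Mat n} (h : InCl B M) : InCl B (-Mᵀ) := by
  obtain ⟨u, h | h | h | h⟩ := h <;> subst h <;> refine ⟨u, ?_⟩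
  · exact Or.inr (Or.inr (Or.inl rfl))
  · exact Or.inr (Or.inr (Or.inr rfl))
  · exact Or.inl (by ext i j; simp)
  · exact Or.inr (Or.inl (by ext i j; simp))

lemma InCl_transpose {B M : Mat n} (h : InCl B M) : InCl B Mᵀ := by
  have h2 := InCl_negT h
  obtain ⟨u, h | h | h | h⟩ := h
  · exact ⟨u, Or.inr (Or.inr (Or.inr (by rw [h, Bmat_neg]; ext i j; simp)))⟩
  · exact ⟨u, Or.inr (Or.inr (Or.inl (by rw [h, Bmat_neg]; ext i j; simp)))⟩
  · exact ⟨u, Or.inr (Or.inl (by rw [h, Bmat_neg]; ext i j; simp))⟩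
  · exact ⟨u, Or.inl (by rw [h, Bmat_neg]; ext i j; simp)⟩

/-- All exchange matrices attached to the class are sign-skew-symmetric. -/
lemma signSkew_of_class {B M : Mat n} (hB : TotSSS B) (h : InCl B M) :
    SignSkew M := by
  obtain ⟨u, h | h | h | h⟩ := h <;> subst h
  · exact hB u
  · rw [Bmat_neg]; exact SignSkew.neg (hB u)
  · exact SignSkew.negT (hB u)
  · rw [Bmat_neg]; exact SignSkew.negT (SignSkew.neg (hB u))

lemma signSkew_Bmat {B M : Mat n} (hB : TotSSS B) (h : InCl B M) (w : List (Fin n)) :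
    SignSkew (Bmat M w) :=
  signSkew_of_class hB (InCl_Bmat h w)

/-- Access to the Assumption for every member of the class. -/
lemma pair_sign {B M : Mat n} (hA : TheAssumption B) (h : InCl B M)
    (w : List (Fin n)) (k : Fin n) :
    ∃ ε : ℤ, ColHasSign (Cmat M w) k ε ∧ ColHasSign (Cmat (-Mᵀ) w) k ε := by
  obtain ⟨u, h | h | h | h⟩ := h
  · exact h ▸ hA (Bmat B u) (Or.inl ⟨u, rfl⟩) w k
  · exact h ▸ hA (Bmat (-B) u) (Or.inr ⟨u, rfl⟩) w k
  · obtain ⟨ε, h1, h2⟩ := hA (Bmat B u) (Or.inl ⟨u, rfl⟩) w k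
    subst h
    refine ⟨ε, h2, ?_⟩
    rw [show -(-(Bmat B u)ᵀ)ᵀ = Bmat B u by ext i j; simp]
    exact h1
  · obtain ⟨ε, h1, h2⟩ := hA (Bmat (-B) u) (Or.inr ⟨u, rfl⟩) w k
    subst h
    refine ⟨ε, h2, ?_⟩
    rw [show -(-(Bmat (-B) u)ᵀ)ᵀ = Bmat (-B) u by ext i j; simp]
    exact h1

/-! ### Column signs -/

/-- The sign of a column (`1` if all entries are nonnegative, `-1` otherwise). -/
def colsgn (A : Mat n) (j : Fin n) : ℤ :=
  if ∀ i, 0 ≤ A i j then 1 else -1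

lemma ColHasSign.colsgn_eq {A : Mat n} {j : Fin n} {ε : ℤ} (h : ColHasSign A j ε) :
    colsgn A j = ε := by
  obtain ⟨⟨i0, hi0⟩, h | h⟩ := h <;> obtain ⟨hε, hs⟩ := h
  · rw [colsgn, if_pos hs, hε]
  · rw [hε, colsgn, if_neg]
    intro hall
    exact hi0 (le_antisymm (hs i0) (hall i0))

lemma colsgn_self {A : Mat n} {j : Fin n} {ε : ℤ} (h : ColHasSign A j ε) :
    ColHasSign A j (colsgn A j) := by
  rw [ColHasSign.colsgn_eq h]; exact h

lemma ColHasSign.cases {A : Mat n} {j : Fin n} {ε : ℤ} (h : ColHasSign A j ε) :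
    (ε = 1 ∧ ∀ i, 0 ≤ A i j) ∨ (ε = -1 ∧ ∀ i, A i j ≤ 0) := h.2

lemma ColHasSign.nonzero {A : Mat n} {j : Fin n} {ε : ℤ} (h : ColHasSign A j ε) :
    ∃ i, A i j ≠ 0 := h.1

lemma colsgn_one (j : Fin n) : colsgn (1 : Mat n) j = 1 := by
  rw [colsgn, if_pos]
  intro i
  by_cases h : i = j <;> simp [one_apply, h]

end SSSAux

namespace SSSAux

open Matrix

variable {n : ℕ}

/-! ### matPos lemmas under sign hypotheses -/

lemma matPos_sub (W : Mat n) : matPos W - W = matPos (-W) := by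
  ext i j
  simp only [Matrix.sub_apply, matPos_apply, Matrix.neg_apply]
  exact int_max_sub_self _

lemma matPos_add (W : Mat n) : matPos (-W) + W = matPos W := by
  ext i j
  have h := int_max_sub_self (W i j)
  simp only [Matrix.add_apply, matPos_apply, Matrix.neg_apply]
  omega

lemma matPos_negmul_E_of_nonneg {C : Mat n} {k : Fin n} (h : ∀ i, 0 ≤ C i k) :
    matPos (-C) * Ek k = 0 := by
  ext i j
  rw [mul_Ek_apply]
  by_cases hj : j = k
  · simp only [hj, if_true, matPos_apply, Matrix.neg_apply, Matrix.zero_apply]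
    have := h i
    omega
  · simp [hj]

lemma matPos_negmul_E_of_nonpos {C : Mat n} {k : Fin n} (h : ∀ i, C i k ≤ 0) :
    matPos (-C) * Ek k = -(C * Ek k) := by
  ext i j
  rw [Matrix.neg_apply, mul_Ek_apply, mul_Ek_apply]
  by_cases hj : j = k
  · simp only [hj, if_true, matPos_apply, Matrix.neg_apply]
    have := h i
    omega
  · simp [hj]

lemma E_mul_matPos_negT_of_nonneg {D : Mat n} {k : Fin n} (h : ∀ j, 0 ≤ D j k) :
    Ek k * matPos (-Dᵀ) = 0 := by
  ext i j
  rw [Ek_mul_apply]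
  by_cases hi : i = k
  · simp only [hi, if_true, matPos_apply, Matrix.neg_apply, transpose_apply, Matrix.zero_apply]
    have := h j
    omega
  · simp [hi]

lemma E_mul_matPos_negT_of_nonpos {D : Mat n} {k : Fin n} (h : ∀ j, D j k ≤ 0) :
    Ek k * matPos (-Dᵀ) = -(Ek k * Dᵀ) := by
  ext i j
  rw [Matrix.neg_apply, Ek_mul_apply, Ek_mul_apply]
  by_cases hi : i = k
  · simp only [hi, if_true, matPos_apply, Matrix.neg_apply, transpose_apply]
    have := h j
    omega
  · simp [hi]

/-! ### One-step recursions with a sign-coherent column -/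

lemma Cmat_step_pos {M : Mat n} {w : List (Fin n)} {k : Fin n}
    (h : ∀ i, 0 ≤ Cmat M w i k) :
    Cmat M (w ++ [k]) = Cmat M w * (Jmat n k + Ek k * matPos (Bmat M w)) := by
  rw [Cmat_append, matPos_negmul_E_of_nonneg h, zero_mul, add_zero]

lemma Cmat_step_neg {M : Mat n} {w : List (Fin n)} {k : Fin n}
    (h : ∀ i, Cmat M w i k ≤ 0) :
    Cmat M (w ++ [k]) = Cmat M w * (Jmat n k + Ek k * matPos (-(Bmat M w))) := by
  rw [Cmat_append, matPos_negmul_E_of_nonpos h]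
  have : Ek k * matPos (-(Bmat M w)) = Ek k * matPos (Bmat M w) - Ek k * Bmat M w := by
    rw [← mul_sub, matPos_sub]
  rw [this, mul_add, mul_add, mul_sub]
  have : -(Cmat M w * Ek k) * Bmat M w = -(Cmat M w * (Ek k * Bmat M w)) := by
    noncomm_ring
  rw [this]
  noncomm_ring

lemma Gmat_step_pos {M : Mat n} {w : List (Fin n)} {k : Fin n}
    (h : ∀ i, 0 ≤ Cmat M w i k) :
    Gmat M (w ++ [k]) = Gmat M w * (Jmat n k + matPos (-(Bmat M w)) * Ek k) := by
  rw [Gmat_append, matPos_negmul_E_of_nonneg h, mul_zero, sub_zero]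

lemma Gmat_step_neg {M : Mat n} {w : List (Fin n)} {k : Fin n}
    (h : ∀ i, Cmat M w i k ≤ 0)
    (hdual : M * Cmat M w = Gmat M w * Bmat M w) :
    Gmat M (w ++ [k]) = Gmat M w * (Jmat n k + matPos (Bmat M w) * Ek k) := by
  rw [Gmat_append, matPos_negmul_E_of_nonpos h]
  have h1 : M * -(Cmat M w * Ek k) = -(M * Cmat M w * Ek k) := by noncomm_ring
  rw [h1, hdual]
  have h2 : matPos (Bmat M w) * Ek k = matPos (-(Bmat M w)) * Ek k + Bmat M w * Ek k := by
    rw [← add_mul, matPos_add]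
  rw [h2]
  noncomm_ring

/-! ### First duality: `M C_w = G_w B_w` -/

lemma firstDuality {B M : Mat n} (hB : TotSSS B) (hM : InCl B M) :
    ∀ w : List (Fin n), M * Cmat M w = Gmat M w * Bmat M w := by
  intro w
  induction w using List.reverseRecOn with
  | nil => rw [Cmat_nil, Gmat_nil, Bmat_nil, mul_one, one_mul]
  | append_singleton w k ih =>
    set W := Bmat M w with hWdef
    set C := Cmat M w with hCdef
    set G := Gmat M w with hGdef
    have hd : W k k = 0 := SignSkew.diagZero (signSkew_Bmat hB hM w) k
    have hd' : matPos (-W) k k = 0 := by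
      simp [matPos_apply, Matrix.neg_apply, hd]
    set EL := Jmat n k + matPos (-W) * Ek k with hELdef
    set F := Jmat n k + Ek k * matPos W with hFdef
    have hW : Bmat M (w ++ [k]) = EL * W * F := by
      rw [Bmat_append, mutB_factor W k hd]
    have hE2 : EL * EL = 1 := EL_sq k _ hd'
    have hEL : Ek k * EL = -Ek k := E_mul_EL k _ hd'
    have hEWF : Ek k * W * F = Ek k * W := by
      rw [hFdef, mul_add]
      have : Ek k * W * (Ek k * matPos W) = Ek k * W * Ek k * matPos W := by
        noncomm_ring
      rw [this, E_mul_mul_E, hd, zero_smul, zero_mul, add_zero]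
      ext i j
      rw [mul_J_apply]
      by_cases hj : j = k
      · rw [if_pos hj, hj, Ek_mul_apply]
        by_cases hi : i = k <;> simp [hi, hd]
      · rw [if_neg hj]
    rw [Cmat_append, Gmat_append, hW, ← hWdef, ← hCdef, ← hGdef, ← hELdef, ← hFdef]
    rw [mul_add, sub_mul]
    have t1 : G * EL * (EL * W * F) = M * (C * F) := by
      have a1 : G * EL * (EL * W * F) = G * (EL * EL) * (W * F) := by noncomm_ring
      rw [a1, hE2, mul_one, ← mul_assoc, ← ih, mul_assoc]
    have t2 : M * (matPos (-C) * Ek k) * (EL * W * F) = -(M * (matPos (-C) * Ek k * W)) := by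
      have a1 : M * (matPos (-C) * Ek k) * (EL * W * F)
          = M * (matPos (-C) * ((Ek k * EL) * W * F)) := by noncomm_ring
      rw [a1, hEL]
      have a2 : matPos (-C) * (-Ek k * W * F) = -(matPos (-C) * (Ek k * W * F)) := by
        noncomm_ring
      rw [a2, hEWF]
      noncomm_ring
    rw [t1, t2]
    noncomm_ring

/-! ### Inverse duality: `G_w^M (C_w^{-Mᵀ})ᵀ = 1` -/

lemma invDuality {B M : Mat n} (hB : TotSSS B) (hA : TheAssumption B) (hM : InCl B M) :
    ∀ w : List (Fin n), Gmat M w * (Cmat (-Mᵀ) w)ᵀ = 1 := by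
  intro w
  induction w using List.reverseRecOn with
  | nil => rw [Cmat_nil, Gmat_nil, transpose_one, mul_one]
  | append_singleton w k ih =>
    set W := Bmat M w with hWdef
    set C := Cmat M w with hCdef
    set G := Gmat M w with hGdef
    set D := Cmat (-Mᵀ) w with hDdef
    have hd : W k k = 0 := SignSkew.diagZero (signSkew_Bmat hB hM w) k
    have hd' : matPos (-W) k k = 0 := by simp [matPos_apply, Matrix.neg_apply, hd]
    set EL := Jmat n k + matPos (-W) * Ek k with hELdef
    have hE2 : EL * EL = 1 := EL_sq k _ hd'
    have hEL : Ek k * EL = -Ek k := E_mul_EL k _ hd'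
    have hBneg : Bmat (-Mᵀ) w = -Wᵀ := by rw [Bmat_negT, hWdef]
    -- D' = D * (J + Ek matPos(-Wᵀ)) + matPos(-D) Ek (-Wᵀ)
    have hD' : Cmat (-Mᵀ) (w ++ [k])
        = D * (Jmat n k + Ek k * matPos (-Wᵀ)) + matPos (-D) * Ek k * (-Wᵀ) := by
      rw [Cmat_append, hBneg, ← hDdef]
    -- transpose it
    have hDT : (Cmat (-Mᵀ) (w ++ [k]))ᵀ
        = EL * Dᵀ - W * (Ek k * matPos (-Dᵀ)) := by
      rw [hD', transpose_add, transpose_mul, transpose_mul, transpose_add,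
        transpose_mul, transpose_mul, Jmat_transpose, transpose_neg,
        transpose_transpose, matPos_transpose, matPos_transpose, transpose_neg,
        transpose_transpose]
      have e1 : (Ek k)ᵀ = Ek k := by
        ext i j; rw [transpose_apply, Ek_apply, Ek_apply]
        by_cases h1 : i = k <;> by_cases h2 : j = k <;> simp [h1, h2]
      rw [e1, hELdef]
      noncomm_ring
    rw [Gmat_append, hDT, ← hWdef, ← hCdef, ← hGdef, ← hELdef]
    rw [sub_mul, mul_sub, mul_sub]
    have t1 : G * EL * (EL * Dᵀ) = 1 := by
      have a1 : G * EL * (EL * Dᵀ) = G * (EL * EL) * Dᵀ := by noncomm_ring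
      rw [a1, hE2, mul_one, ih]
    have t2 : M * (matPos (-C) * Ek k) * (EL * Dᵀ)
        = -(M * (matPos (-C) * Ek k * Dᵀ)) := by
      have a1 : M * (matPos (-C) * Ek k) * (EL * Dᵀ)
          = M * (matPos (-C) * ((Ek k * EL) * Dᵀ)) := by noncomm_ring
      rw [a1, hEL]
      noncomm_ring
    have hELWE : EL * (W * Ek k) = W * Ek k := by
      rw [hELdef, add_mul]
      have b1 : matPos (-W) * Ek k * (W * Ek k) = matPos (-W) * (Ek k * W * Ek k) := by
        noncomm_ring
      rw [b1, E_mul_mul_E, hd, zero_smul, mul_zero, add_zero]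
      rw [Jmat_eq, sub_mul, one_mul, smul_mul_assoc]
      have b2 : Ek k * (W * Ek k) = (0:ℤ) • Ek k := by
        rw [← mul_assoc, E_mul_mul_E, hd]
      rw [b2]
      simp
    have t3 : G * EL * (W * (Ek k * matPos (-Dᵀ)))
        = M * C * (Ek k * matPos (-Dᵀ)) := by
      have hfd : M * C = G * W := firstDuality hB hM w
      have a1 : G * EL * (W * (Ek k * matPos (-Dᵀ)))
          = G * (EL * (W * Ek k)) * matPos (-Dᵀ) := by noncomm_ring
      rw [a1, hELWE, ← mul_assoc, ← hfd]
      noncomm_ring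
    have t4 : M * (matPos (-C) * Ek k) * (W * (Ek k * matPos (-Dᵀ))) = 0 := by
      have a1 : M * (matPos (-C) * Ek k) * (W * (Ek k * matPos (-Dᵀ)))
          = M * (matPos (-C) * ((Ek k * W * Ek k) * matPos (-Dᵀ))) := by noncomm_ring
      rw [a1, E_mul_mul_E, hd, zero_smul, zero_mul, mul_zero, mul_zero]
    rw [t1, t2, t3, t4]
    -- remaining: 1 - M C Ek matPos(-Dᵀ) - (-(M matPos(-C) Ek Dᵀ) - 0) = 1
    obtain ⟨ε, hC, hD⟩ := pair_sign hA hM w k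
    rcases hC.2 with ⟨hε, hCpos⟩ | ⟨hε, hCneg⟩
    · rcases hD.2 with ⟨_, hDpos⟩ | ⟨hε', hDneg⟩
      · rw [E_mul_matPos_negT_of_nonneg (fun j => hDpos j),
          matPos_negmul_E_of_nonneg (fun i => hCpos i)]
        simp
      · rw [hε] at hε'; exact absurd hε' (by norm_num)
    · rcases hD.2 with ⟨hε', _⟩ | ⟨_, hDneg⟩
      · rw [hε] at hε'; exact absurd hε' (by norm_num)
      · rw [E_mul_matPos_negT_of_nonpos (fun j => hDneg j),
          matPos_negmul_E_of_nonpos (fun i => hCneg i)]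
        have a1 : M * C * -(Ek k * Dᵀ) = -(M * (C * Ek k * Dᵀ)) := by noncomm_ring
        have a2 : M * (-(C * Ek k) * Dᵀ) = -(M * (C * Ek k * Dᵀ)) := by noncomm_ring
        rw [a1, a2]
        noncomm_ring

end SSSAux

namespace SSSAux

open Matrix

variable {n : ℕ}

lemma Ek_transpose (k : Fin n) : (Ek k)ᵀ = Ek k := by
  ext i j; rw [transpose_apply, Ek_apply, Ek_apply]
  by_cases h1 : i = k <;> by_cases h2 : j = k <;> simp [h1, h2]

lemma stdBasis_mul_apply (a b : Fin n) (X : Mat n) (i j : Fin n) :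
    (Matrix.single a b (1:ℤ) * X) i j = if i = a then X b j else 0 := by
  rw [mul_apply, Finset.sum_eq_single b]
  · simp only [Matrix.single, of_apply]
    rcases eq_or_ne i a with h1 | h1
    · simp [h1]
    · simp [h1, Ne.symm h1]
  · intro c _ hc
    simp only [Matrix.single, of_apply]
    simp [Ne.symm hc]
  · simp

lemma mul_stdBasis_apply (a b : Fin n) (X : Mat n) (i j : Fin n) :
    (X * Matrix.single a b (1:ℤ)) i j = if j = b then X i a else 0 := by
  rw [mul_apply, Finset.sum_eq_single a]
  · simp only [Matrix.single, of_apply]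
    rcases eq_or_ne j b with h1 | h1
    · simp [h1]
    · simp [h1, Ne.symm h1]
  · intro c _ hc
    simp only [Matrix.single, of_apply]
    simp [Ne.symm hc]
  · simp

lemma stdBasis_triple (a b c d : Fin n) (X : Mat n) :
    Matrix.single a b (1:ℤ) * X * Matrix.single c d 1 = X b c • Matrix.single a d 1 := by
  ext i j
  rw [mul_stdBasis_apply, stdBasis_mul_apply, Matrix.smul_apply]
  simp only [Matrix.single, of_apply, smul_eq_mul]
  rcases eq_or_ne i a with h1 | h1 <;> rcases eq_or_ne j d with h2 | h2
  · simp [h1, h2]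
  · simp [h1, h2, Ne.symm h2]
  · simp [h1, h2, Ne.symm h1]
  · simp [h1, h2, Ne.symm h1]

lemma J_mul_stdBasis (l m : Fin n) :
    Jmat n l * Matrix.single l m (1:ℤ) = -Matrix.single l m 1 := by
  ext i j
  rw [J_mul_apply, Matrix.neg_apply]
  simp only [Matrix.single, of_apply]
  rcases eq_or_ne i l with h1 | h1 <;> rcases eq_or_ne j m with h2 | h2
  · simp [h1, h2]
  · simp [h1, h2, Ne.symm h2]
  · simp [h1, h2, Ne.symm h1]
  · simp [h1, h2, Ne.symm h1]

/-! ### Sign helper lemmas -/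

lemma ColHasSign.sign_cases {A : Mat n} {j : Fin n} {ε : ℤ} (h : ColHasSign A j ε) :
    ε = 1 ∨ ε = -1 := by
  rcases h.2 with ⟨h1, _⟩ | ⟨h1, _⟩
  · exact Or.inl h1
  · exact Or.inr h1

lemma ColHasSign.unique {A : Mat n} {j : Fin n} {ε₁ ε₂ : ℤ}
    (h1 : ColHasSign A j ε₁) (h2 : ColHasSign A j ε₂) : ε₁ = ε₂ := by
  rw [← ColHasSign.colsgn_eq h1, ← ColHasSign.colsgn_eq h2]

/-- Entries off row `p` are unchanged by a `(J_p + E_p Y)` factor. -/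
lemma factor_off {X C Y : Mat n} {p : Fin n}
    (hX : X = (Jmat n p + Ek p * Y) * C) {i j : Fin n} (hi : i ≠ p) :
    X i j = C i j := by
  rw [hX, add_mul, Matrix.add_apply, J_mul_apply, if_neg hi, mul_assoc]
  rw [show (Ek p * (Y * C)) i j = if i = p then (Y * C) p j else 0 from Ek_mul_apply _ _ _ _]
  rw [if_neg hi, add_zero]

/-- On a column supported in row `p`, the factor negates the `p`-entry. -/
lemma factor_diag {X C Y : Mat n} {p : Fin n}
    (hX : X = (Jmat n p + Ek p * Y) * C) (hY : Y p p = 0) {j : Fin n}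
    (hs : ∀ i, i ≠ p → C i j = 0) :
    X p j = -C p j := by
  rw [hX, add_mul, Matrix.add_apply, J_mul_apply, if_pos rfl, mul_assoc]
  rw [show (Ek p * (Y * C)) p j = if p = p then (Y * C) p j else 0 from Ek_mul_apply _ _ _ _]
  rw [if_pos rfl, mul_apply, Finset.sum_eq_single p]
  · rw [hY, zero_mul, add_zero]
  · intro b _ hb
    rw [hs b hb, mul_zero]
  · simp

/-- Flip characterization: the column sign flips iff the column of `C` is
supported in row `p`. -/
lemma flip_iff {X C Y : Mat n} {p j : Fin n} {εX εC : ℤ}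
    (hX : X = (Jmat n p + Ek p * Y) * C) (hY : Y p p = 0)
    (hXs : ColHasSign X j εX) (hCs : ColHasSign C j εC) :
    εX ≠ εC ↔ ∀ i, i ≠ p → C i j = 0 := by
  constructor
  · intro hne i hi
    rcases hXs.2 with ⟨hX1, hXpos⟩ | ⟨hX1, hXneg⟩ <;>
      rcases hCs.2 with ⟨hC1, hCpos⟩ | ⟨hC1, hCneg⟩
    · exact absurd (hX1.trans hC1.symm) hne
    · have := hXpos i; have := hCneg i
      have he := factor_off (j := j) hX hi
      omega
    · have := hXneg i; have := hCpos i
      have he := factor_off (j := j) hX hi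
      omega
    · exact absurd (hX1.trans hC1.symm) hne
  · intro hs
    have hpj : C p j ≠ 0 := by
      obtain ⟨i0, hi0⟩ := hCs.1
      by_cases h : i0 = p
      · rwa [← h]
      · exact absurd (hs i0 h) hi0
    have hXd := factor_diag hX hY hs
    rcases hCs.2 with ⟨hC1, hCpos⟩ | ⟨hC1, hCneg⟩
    · rcases hXs.2 with ⟨hX1, hXpos⟩ | ⟨hX1, hXneg⟩
      · have := hXpos p; have := hCpos p
        omega
      · omega
    · rcases hXs.2 with ⟨hX1, hXpos⟩ | ⟨hX1, hXneg⟩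
      · omega
      · have := hXneg p; have := hCneg p
        omega

/-- Singleton support transfer through the inverse duality `G Dᵀ = 1`. -/
lemma supp_transfer {G D : Mat n} (h : G * Dᵀ = 1) (l m : Fin n) :
    ((∀ j, j ≠ m → G l j = 0) ∧ G l m ≠ 0)
      ↔ ((∀ i, i ≠ l → D i m = 0) ∧ D l m ≠ 0) := by
  have h' : Dᵀ * G = 1 := mul_eq_one_comm.mp h
  constructor
  · rintro ⟨hsupp, hne⟩
    have key : ∀ i : Fin n, G l m * D i m = (1 : Mat n) l i := by
      intro i
      have := congrFun (congrFun h l) i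
      rw [mul_apply] at this
      rw [← this, Finset.sum_eq_single m]
      · rw [transpose_apply]
      · intro b _ hb
        rw [hsupp b hb, zero_mul]
      · simp
    constructor
    · intro i hi
      have := key i
      rw [one_apply_ne (Ne.symm hi)] at this
      rcases mul_eq_zero.mp this with h0 | h0
      · exact absurd h0 hne
      · exact h0
    · intro h0
      have := key l
      rw [one_apply_eq, h0, mul_zero] at this
      exact absurd this.symm one_ne_zero
  · rintro ⟨hsupp, hne⟩
    have key : ∀ j : Fin n, D l m * G l j = (1 : Mat n) m j := by
      intro j
      have := congrFun (congrFun h' m) j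
      rw [mul_apply] at this
      rw [← this, Finset.sum_eq_single l]
      · rw [transpose_apply]
      · intro b _ hb
        rw [transpose_apply, hsupp b hb, zero_mul]
      · simp
    constructor
    · intro j hj
      have := key j
      rw [one_apply_ne (Ne.symm hj)] at this
      rcases mul_eq_zero.mp this with h0 | h0
      · exact absurd h0 hne
      · exact h0
    · intro h0
      have := key m
      rw [one_apply_eq, h0, mul_zero] at this
      exact absurd this.symm one_ne_zero

/-- Unit entries: if a product over `ℤ` of two entries is `1`, each is `±1`. -/
lemma unit_entry {a b : ℤ} (h : a * b = 1) : a = 1 ∨ a = -1 := by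
  have := Int.isUnit_iff.mp (IsUnit.of_mul_eq_one (a := a) b h)
  exact this

end SSSAux

namespace SSSAux

open Matrix

variable {n : ℕ}

/-- The sign used in the first-letter factorization lemma. -/
def sgm (M : Mat n) (l : Fin n) (v : List (Fin n)) : ℤ :=
  colsgn (Cmat ((Bmat (mutB M l) v)ᵀ) v.reverse) l

/-- Statement `P2` at level `s`: second duality. -/
def P2s (B : Mat n) (s : ℕ) : Prop :=
  ∀ M : Mat n, InCl B M → ∀ w : List (Fin n), w.length = s →
    Gmat M w = (Cmat ((Bmat M w)ᵀ) w.reverse)ᵀ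

/-- Statement `CL` at level `s`: first-letter factorization. -/
def CLs (B : Mat n) (s : ℕ) : Prop :=
  ∀ M : Mat n, InCl B M → ∀ (l : Fin n) (v : List (Fin n)), v.length = s →
    Cmat M (l :: v)
      = (Jmat n l + Ek l * matPos ((-(sgm M l v)) • mutB M l)) * Cmat (mutB M l) v

lemma col_coherent {B M : Mat n} (hA : TheAssumption B) (hM : InCl B M)
    (w : List (Fin n)) (k : Fin n) :
    ColHasSign (Cmat M w) k (colsgn (Cmat M w) k) := by
  obtain ⟨ε, h1, _⟩ := pair_sign hA hM w k
  exact colsgn_self h1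

lemma colsgn_pair {B M : Mat n} (hA : TheAssumption B) (hM : InCl B M)
    (w : List (Fin n)) (k : Fin n) :
    colsgn (Cmat M w) k = colsgn (Cmat (-Mᵀ) w) k := by
  obtain ⟨ε, h1, h2⟩ := pair_sign hA hM w k
  rw [ColHasSign.colsgn_eq h1, ColHasSign.colsgn_eq h2]

lemma supp_nonzero {A : Mat n} {j p : Fin n} {ε : ℤ} (hco : ColHasSign A j ε)
    (hs : ∀ i, i ≠ p → A i j = 0) : A p j ≠ 0 := by
  obtain ⟨i0, hi0⟩ := hco.1
  by_cases h : i0 = p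
  · rwa [← h]
  · exact absurd (hs i0 h) hi0

lemma matPos_neg_one_mat : matPos (-(1 : Mat n)) = 0 := by
  ext i j
  simp only [matPos_apply, Matrix.neg_apply, one_apply, Matrix.zero_apply]
  by_cases h : i = j <;> simp [h]

lemma row_matPos_neg_mutB (M : Mat n) (l : Fin n) :
    Ek l * matPos (-(mutB M l)) = Ek l * matPos M := by
  ext i j
  rw [Ek_mul_apply, Ek_mul_apply]
  by_cases h : i = l
  · rw [if_pos h, if_pos h, matPos_apply, matPos_apply, Matrix.neg_apply, mutB_apply,
      if_pos (Or.inl rfl), neg_neg]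
  · rw [if_neg h, if_neg h]

/-! ### Base case -/

lemma P2_zero (B : Mat n) : P2s B 0 := by
  intro M _ w hw
  rw [List.length_eq_zero_iff] at hw
  subst hw
  rw [Gmat_nil, List.reverse_nil, Cmat_nil, transpose_one]

lemma CL_zero (B : Mat n) : CLs B 0 := by
  intro M _ l v hv
  rw [List.length_eq_zero_iff] at hv
  subst hv
  have h1 : sgm M l [] = 1 := by
    unfold sgm
    rw [List.reverse_nil, Cmat_nil, colsgn_one]
  rw [h1, Cmat_nil, mul_one]
  have h2 : (l :: []) = ([] : List (Fin n)) ++ [l] := rfl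
  rw [h2, Cmat_append, Cmat_nil, Bmat_nil, matPos_neg_one_mat, one_mul, zero_mul,
    zero_mul, add_zero]
  rw [show (-(1:ℤ)) • mutB M l = -(mutB M l) by rw [neg_smul, one_smul],
    row_matPos_neg_mutB]

/-! ### Induction step for P2 -/

lemma P2_step {B : Mat n} (hB : TotSSS B) (hA : TheAssumption B) {s : ℕ}
    (ihP2 : P2s B s) (ihCL : CLs B s) : P2s B (s+1) := by
  intro M hM w hw
  rcases List.eq_nil_or_concat w with rfl | ⟨w', k, rfl⟩
  · simp at hw
  rw [List.concat_eq_append] at hw ⊢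
  have hw' : w'.length = s := by simpa using hw
  have hCco : ColHasSign (Cmat M w') k (colsgn (Cmat M w') k) := col_coherent hA hM w' k
  have hfd := firstDuality hB hM w'
  have hWc : InCl B (Bmat M w')ᵀ := InCl_transpose (InCl_Bmat hM w')
  have hNcl : InCl B (mutB (Bmat M w')ᵀ k) := InCl_mutB hWc k
  have hrev : (w' ++ [k]).reverse = k :: w'.reverse := by simp
  have hbase : (Bmat M (w' ++ [k]))ᵀ = mutB (Bmat M w')ᵀ k := by
    rw [Bmat_append, mutB_transpose]
  have hCLinst := ihCL (mutB (Bmat M w')ᵀ k) hNcl k w'.reverse (by simpa using hw')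
  rw [mutB_mutB] at hCLinst
  have hsgm : sgm (mutB (Bmat M w')ᵀ k) k w'.reverse = colsgn (Cmat M w') k := by
    unfold sgm
    rw [mutB_mutB, List.reverse_reverse]
    rw [show (Bmat (Bmat M w')ᵀ w'.reverse)ᵀ = M by
      rw [Bmat_transpose, transpose_transpose, Bmat_reverse]]
  rw [hsgm] at hCLinst
  have hP2inst := ihP2 M hM w' hw'
  have hCrev : Cmat (Bmat M w')ᵀ w'.reverse = (Gmat M w')ᵀ := by
    rw [hP2inst, transpose_transpose]
  rw [hrev, hbase, hCLinst, hCrev]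
  rw [transpose_mul, transpose_transpose, transpose_add, Jmat_transpose,
    transpose_mul, Ek_transpose, matPos_transpose]
  rw [show ((-(colsgn (Cmat M w') k)) • (Bmat M w')ᵀ)ᵀ
      = (-(colsgn (Cmat M w') k)) • Bmat M w' by
    rw [transpose_smul, transpose_transpose]]
  rcases hCco.2 with ⟨hε, hpos⟩ | ⟨hε, hneg⟩
  · rw [Gmat_step_pos hpos, hε]
    rw [show (-(1:ℤ)) • Bmat M w' = -(Bmat M w') by rw [neg_smul, one_smul]]
  · rw [Gmat_step_neg hneg hfd, hε]
    rw [show (-(-1:ℤ)) • Bmat M w' = Bmat M w' by norm_num]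

end SSSAux

namespace SSSAux

open Matrix

variable {n : ℕ}

/-- The final algebraic cancellation in the flip case of the CL induction step. -/
lemma final_algebra {P' Q' C K T EB : Mat n} {σ η c g : ℤ}
    (h1 : P' * T = -T)
    (h2 : C * EB = c • T)
    (h3 : K * C = g • T)
    (h4 : T * Q' = T)
    (h5 : T * EB = 0)
    (h6 : η * c = -1) (h7 : σ * g = 1) :
    (P' + (-σ) • K) * C * (Q' + η • EB) = P' * (C * Q') := by
  have e1 : (P' + (-σ) • K) * C = P' * C - T := by
    rw [add_mul, smul_mul_assoc, h3, smul_smul,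
      show (-σ) * g = -1 by rw [neg_mul, h7], neg_one_smul, ← sub_eq_add_neg]
  have e2 : P' * (C * EB) = (-c) • T := by
    rw [h2, mul_smul_comm, h1, smul_neg, ← neg_smul]
  calc (P' + (-σ) • K) * C * (Q' + η • EB)
      = (P' * C - T) * (Q' + η • EB) := by rw [e1]
    _ = P' * (C * Q') + η • (P' * (C * EB)) - (T * Q' + η • (T * EB)) := by
        simp only [sub_mul, mul_add, mul_smul_comm, mul_assoc, smul_sub]
        abel
    _ = P' * (C * Q') := by
        rw [e2, h4, h5, smul_zero, add_zero, smul_smul,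
          show η * (-c) = 1 by rw [mul_neg, h6, neg_neg], one_smul]
        abel

lemma CL_step {B : Mat n} (hB : TotSSS B) (hA : TheAssumption B) {s : ℕ}
    (ihP2 : P2s B s) (ihCL : CLs B s) : CLs B (s+1) := by
  intro M hM l v hv
  rcases List.eq_nil_or_concat v with rfl | ⟨v', m, rfl⟩
  · simp at hv
  rw [List.concat_eq_append] at hv ⊢
  have hv' : v'.length = s := by simpa using hv
  -- Notation
  set M' := mutB M l with hM'def
  have hM'cl : InCl B M' := InCl_mutB hM l
  set B' := Bmat M' v' with hB'def
  set C := Cmat M' v' with hCdef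
  set X := Cmat M (l :: v') with hXdef
  set Z := Cmat B'ᵀ v'.reverse with hZdef
  set Gv := Gmat M' v' with hGvdef
  set D := Cmat (-M'ᵀ) v' with hDdef
  have hB'cl : InCl B B' := InCl_Bmat hM'cl v'
  have hZbcl : InCl B B'ᵀ := InCl_transpose hB'cl
  have hdM' : M' l l = 0 := SignSkew.diagZero (signSkew_of_class hB hM'cl) l
  have hdB' : B' m m = 0 := SignSkew.diagZero (signSkew_Bmat hB hM'cl v') m
  -- Signs
  set η := colsgn X m with hηdef
  set η' := colsgn C m with hη'def
  set σ := colsgn Z l with hσdef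
  have hXco : ColHasSign X m η := col_coherent hA hM (l::v') m
  have hCco : ColHasSign C m η' := col_coherent hA hM'cl v' m
  have hZco : ColHasSign Z l σ := col_coherent hA hZbcl v'.reverse l
  -- IH CL instance at (M, l, v')
  have hCL0 : X = (Jmat n l + Ek l * matPos ((-σ) • M')) * C := by
    have := ihCL M hM l v' hv'
    rw [show sgm M l v' = σ from rfl] at this
    exact this
  have hY0 : (matPos ((-σ) • M')) l l = 0 := by
    rw [matPos_apply, Matrix.smul_apply, hdM', smul_zero]
    simp
  -- σ' and Z'
  set Z' := Cmat ((mutB B' m)ᵀ) (m :: v'.reverse) with hZ'def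
  have hσ'eq : sgm M l (v' ++ [m]) = colsgn Z' l := by
    unfold sgm
    rw [← hM'def, Bmat_append, ← hB'def, List.reverse_append]
    rfl
  set σ' := colsgn Z' l with hσ'def
  have hZ'cl : InCl B (mutB B' m)ᵀ := InCl_transpose (InCl_mutB hB'cl m)
  have hZ'co : ColHasSign Z' l σ' := col_coherent hA hZ'cl (m :: v'.reverse) l
  -- Z' factorization
  have hZ'fac : Z' = (Jmat n m + Ek m * matPos ((-η') • B'ᵀ)) * Z := by
    have h0 : (mutB B' m)ᵀ = mutB B'ᵀ m := (mutB_transpose B' m).symm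
    have hI := ihCL (mutB B'ᵀ m) (InCl_mutB hZbcl m) m v'.reverse (by simpa using hv')
    rw [mutB_mutB] at hI
    have hs : sgm (mutB B'ᵀ m) m v'.reverse = η' := by
      unfold sgm
      rw [mutB_mutB, List.reverse_reverse]
      rw [show (Bmat B'ᵀ v'.reverse)ᵀ = M' by
        rw [Bmat_transpose, transpose_transpose, hB'def, Bmat_reverse]]
    rw [hs] at hI
    rw [hZ'def, h0]
    exact hI
  have hY0' : (matPos ((-η') • B'ᵀ)) m m = 0 := by
    rw [matPos_apply, Matrix.smul_apply, transpose_apply, hdB', smul_zero]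
    simp
  -- one-step expansions
  have hLHS : Cmat M (l :: (v' ++ [m])) = X * (Jmat n m + Ek m * matPos (η • B')) := by
    have hcons : l :: (v' ++ [m]) = (l :: v') ++ [m] := rfl
    have hBc : Bmat M (l :: v') = B' := by rw [Bmat_cons, ← hM'def, ← hB'def]
    rcases hXco.2 with ⟨hε, hpos⟩ | ⟨hε, hneg⟩
    · rw [hcons, Cmat_step_pos hpos, hBc, hε, one_smul]
    · rw [hcons, Cmat_step_neg hneg, hBc, hε]
      rw [show (-1 : ℤ) • B' = -B' by rw [neg_smul, one_smul]]
  have hRHS : Cmat M' (v' ++ [m]) = C * (Jmat n m + Ek m * matPos (η' • B')) := by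
    rcases hCco.2 with ⟨hε, hpos⟩ | ⟨hε, hneg⟩
    · rw [Cmat_step_pos hpos, ← hB'def, ← hCdef, hε, one_smul]
    · rw [Cmat_step_neg hneg, ← hB'def, ← hCdef, hε]
      rw [show (-1 : ℤ) • B' = -B' by rw [neg_smul, one_smul]]
  -- support transfer chain
  have hGD : Gv * Dᵀ = 1 := invDuality hB hA hM'cl v'
  have hGvZ : Gv = Zᵀ := ihP2 M' hM'cl v' hv'
  have hCflip : (η ≠ η') ↔ (∀ i, i ≠ l → C i m = 0) := flip_iff hCL0 hY0 hXco hCco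
  have hPQ : (∀ i, i ≠ l → C i m = 0) ↔ (∀ i, i ≠ m → Z i l = 0) := by
    have hCcl : InCl B (-Mᵀ) := InCl_negT hM
    have hDcl : InCl B (-M'ᵀ) := InCl_negT hM'cl
    have hCfac : Cmat (-Mᵀ) (l :: v')
        = (Jmat n l + Ek l * matPos ((-(sgm (-Mᵀ) l v')) • (-(mutB M l)ᵀ)))
          * Cmat (-(mutB M l)ᵀ) v' := by
      have := ihCL (-Mᵀ) hCcl l v' hv'
      rw [mutB_negT] at this
      exact this
    have hY0'' : (matPos ((-(sgm (-Mᵀ) l v')) • (-(mutB M l)ᵀ))) l l = 0 := by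
      rw [matPos_apply, Matrix.smul_apply, Matrix.neg_apply, transpose_apply]
      rw [show mutB M l l l = 0 from hdM', neg_zero, smul_zero]
      simp
    have hCco2 := col_coherent hA hCcl (l :: v') m
    have hDco := col_coherent hA hDcl v' m
    have hp1 : colsgn (Cmat (-Mᵀ) (l :: v')) m = η := (colsgn_pair hA hM (l :: v') m).symm
    have hp2 : colsgn (Cmat (-M'ᵀ) v') m = η' := (colsgn_pair hA hM'cl v' m).symm
    have hDflip : (colsgn (Cmat (-Mᵀ) (l :: v')) m ≠ colsgn (Cmat (-M'ᵀ) v') m)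
        ↔ (∀ i, i ≠ l → Cmat (-(mutB M l)ᵀ) v' i m = 0) :=
      flip_iff hCfac hY0'' hCco2 hDco
    rw [hp1, hp2] at hDflip
    have hPD : (∀ i, i ≠ l → C i m = 0) ↔ (∀ i, i ≠ l → D i m = 0) := by
      rw [← hCflip, ← hDflip]
    constructor
    · intro hP
      have hD : ∀ i, i ≠ l → D i m = 0 := hPD.mp hP
      have hDnz : D l m ≠ 0 := supp_nonzero hDco hD
      have hGrow := (supp_transfer hGD l m).mpr ⟨hD, hDnz⟩
      intro i him
      have h0 := hGrow.1 i him
      rw [hGvZ, transpose_apply] at h0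
      exact h0
    · intro hQ
      have hGrow : (∀ j, j ≠ m → Gv l j = 0) ∧ Gv l m ≠ 0 := by
        constructor
        · intro j hj
          rw [hGvZ, transpose_apply]
          exact hQ j hj
        · rw [hGvZ, transpose_apply]
          exact supp_nonzero hZco hQ
      exact hPD.mpr ((supp_transfer hGD l m).mp hGrow).1
  -- rewrite the goal
  rw [hσ'eq, hLHS, hRHS, hCL0]
  by_cases hee : η' = η
  · -- no flip
    have hflip1 : ¬(η ≠ η') := by simp [hee]
    have hPsupp : ¬(∀ i, i ≠ l → C i m = 0) := by
      intro h
      exact hflip1 ((flip_iff hCL0 hY0 hXco hCco).mpr h)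
    have hQsupp : ¬(∀ i, i ≠ m → Z i l = 0) := fun h => hPsupp (hPQ.mpr h)
    have hσσ' : σ' = σ := by
      by_contra hne
      exact hQsupp ((flip_iff hZ'fac hY0' hZ'co hZco).mp hne)
    rw [hσσ', hee, mul_assoc]
  · -- flip case
    have hPsupp : ∀ i, i ≠ l → C i m = 0 :=
      (flip_iff hCL0 hY0 hXco hCco).mp (fun h => hee h.symm)
    have hQsupp : ∀ i, i ≠ m → Z i l = 0 := hPQ.mp hPsupp
    have hσσ' : σ' = -σ := by
      have hne : σ' ≠ σ := (flip_iff hZ'fac hY0' hZ'co hZco).mpr hQsupp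
      rcases ColHasSign.sign_cases hZ'co with h1 | h1 <;> rcases ColHasSign.sign_cases hZco with h2 | h2 <;>
        rw [h1, h2] <;> first | rfl | (exfalso; rw [h1, h2] at hne; simp at hne)
    have hηη' : η' = -η := by
      rcases ColHasSign.sign_cases hXco with h1 | h1 <;> rcases ColHasSign.sign_cases hCco with h2 | h2 <;>
        rw [h1, h2] <;> first | rfl | (exfalso; rw [h1, h2] at hee; simp at hee)
    -- scalars
    have hc0 : C l m ≠ 0 := supp_nonzero hCco hPsupp
    have hGC1 : Gmat (-M'ᵀ) v' * Cᵀ = 1 := by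
      have h0 := invDuality hB hA (InCl_negT hM'cl) v'
      rw [show -(-M'ᵀ)ᵀ = M' by ext i j; simp] at h0
      exact h0
    have hCG1 : Cᵀ * Gmat (-M'ᵀ) v' = 1 := mul_eq_one_comm.mp hGC1
    have hcunit : C l m = 1 ∨ C l m = -1 := by
      have h1 := congrFun (congrFun hCG1 m) m
      rw [mul_apply, one_apply_eq, Finset.sum_eq_single l] at h1
      · rw [transpose_apply] at h1
        exact unit_entry h1
      · intro b _ hb
        rw [transpose_apply, hPsupp b hb, zero_mul]
      · simp
    have hgval : Gv l m = Z m l := by rw [hGvZ, transpose_apply]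
    have hgunit : Z m l = 1 ∨ Z m l = -1 := by
      have h1 := congrFun (congrFun hGD l) l
      rw [mul_apply, one_apply_eq, Finset.sum_eq_single m] at h1
      · rw [transpose_apply, hgval] at h1
        exact unit_entry h1
      · intro b _ hb
        have hz : Gv l b = 0 := by rw [hGvZ, transpose_apply]; exact hQsupp b hb
        rw [hz, zero_mul]
      · simp
    have hXlm : X l m = -(C l m) := factor_diag hCL0 hY0 hPsupp
    have hηc : η * C l m = -1 := by
      rcases hXco.2 with ⟨h1, hpos⟩ | ⟨h1, hneg⟩
      · have h2 := hpos l
        rw [hXlm] at h2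
        rcases hcunit with hc | hc <;> rw [h1, hc] <;> omega
      · have h2 := hneg l
        rw [hXlm] at h2
        rcases hcunit with hc | hc <;> rw [h1, hc] <;> omega
    have hσg : σ * Z m l = 1 := by
      rcases hZco.2 with ⟨h1, hpos⟩ | ⟨h1, hneg⟩
      · have h2 := hpos m
        rcases hgunit with hg | hg <;> rw [h1, hg] <;> omega
      · have h2 := hneg m
        rcases hgunit with hg | hg <;> rw [h1, hg] <;> omega
    -- matrix pieces
    have hMC : M' * C = Gv * B' := firstDuality hB hM'cl v'
    have hCS : C * Ek m = C l m • Matrix.single l m (1:ℤ) := by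
      ext i j
      rw [mul_Ek_apply, Matrix.smul_apply, smul_eq_mul]
      simp only [Matrix.single, of_apply]
      by_cases hj : j = m
      · rw [if_pos hj]
        by_cases hi : i = l
        · rw [if_pos ⟨hi.symm, hj.symm⟩, mul_one, hi]
        · rw [hPsupp i hi, if_neg (fun hh => hi hh.1.symm), mul_zero]
      · rw [if_neg hj, if_neg (fun hh => hj hh.2.symm), mul_zero]
    have hGrow2 : Ek l * Gv = Z m l • Matrix.single l m (1:ℤ) := by
      ext i j
      rw [Ek_mul_apply, Matrix.smul_apply, smul_eq_mul]
      simp only [Matrix.single, of_apply]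
      by_cases hi : i = l
      · rw [if_pos hi]
        by_cases hj : j = m
        · rw [if_pos ⟨hi.symm, hj.symm⟩, mul_one, hj, hgval]
        · have hz : Gv l j = 0 := by rw [hGvZ, transpose_apply]; exact hQsupp j hj
          rw [hz, if_neg (fun hh => hj hh.2.symm), mul_zero]
      · rw [if_neg hi, if_neg (fun hh => hi hh.1.symm), mul_zero]
    have hY0σ' : (matPos ((-σ') • M')) l l = 0 := by
      rw [matPos_apply, Matrix.smul_apply, hdM', smul_zero]
      simp
    have hPElm : (Jmat n l + Ek l * matPos ((-σ') • M')) * Matrix.single l m (1:ℤ)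
        = -Matrix.single l m 1 := by
      rw [add_mul, J_mul_stdBasis]
      have h0 : Ek l * matPos ((-σ') • M') * Matrix.single l m 1
          = (matPos ((-σ') • M')) l l • Matrix.single l m 1 := stdBasis_triple l l l m _
      rw [h0, hY0σ', zero_smul, add_zero]
    have hElmBEm : Matrix.single l m (1:ℤ) * B' * Ek m = 0 := by
      have h0 := stdBasis_triple l m m m B'
      rw [show Ek m = Matrix.single m m (1:ℤ) from rfl, h0, hdB', zero_smul]
    have hElmQ : Matrix.single l m (1:ℤ) * B' * (Jmat n m + Ek m * matPos ((-η) • B'))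
        = Matrix.single l m 1 * B' := by
      rw [mul_add]
      have h1 : Matrix.single l m (1:ℤ) * B' * (Ek m * matPos ((-η) • B')) = 0 := by
        rw [← mul_assoc, hElmBEm, zero_mul]
      have h2 : Matrix.single l m (1:ℤ) * B' * Jmat n m = Matrix.single l m 1 * B' := by
        rw [Jmat_eq, mul_sub, mul_one, mul_smul_comm, hElmBEm, smul_zero, sub_zero]
      rw [h1, h2, add_zero]
    have hPdiff : Jmat n l + Ek l * matPos ((-σ) • M')
        = (Jmat n l + Ek l * matPos ((-σ') • M')) + (-σ) • (Ek l * M') := by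
      rw [hσσ', neg_neg]
      have h0 : matPos ((-σ) • M') = matPos (σ • M') + (-σ) • M' := by
        ext i j
        simp only [Matrix.add_apply, matPos_apply, Matrix.smul_apply, smul_eq_mul]
        have h2 := int_max_sub_max ((-σ) * M' i j)
        have h3 : σ * M' i j = -((-σ) * M' i j) := by ring
        rw [h3]
        omega
      rw [h0, mul_add, mul_smul_comm, add_assoc]
    have hQdiff : Jmat n m + Ek m * matPos (η • B')
        = (Jmat n m + Ek m * matPos ((-η) • B')) + η • (Ek m * B') := by
      have h0 : matPos (η • B') = matPos ((-η) • B') + η • B' := by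
        ext i j
        simp only [Matrix.add_apply, matPos_apply, Matrix.smul_apply, smul_eq_mul]
        have h2 := int_max_sub_max (η * B' i j)
        have h3 : (-η) * B' i j = -(η * B' i j) := by ring
        rw [h3]
        omega
      rw [h0, mul_add, mul_smul_comm, add_assoc]
    rw [hηη', hPdiff, hQdiff]
    refine final_algebra (T := Matrix.single l m (1:ℤ) * B') ?_ ?_ ?_ ?_ ?_ hηc hσg
    · rw [← mul_assoc, hPElm, neg_mul]
    · rw [← mul_assoc, hCS, smul_mul_assoc]
    · rw [mul_assoc, hMC, ← mul_assoc, hGrow2, smul_mul_assoc]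
    · exact hElmQ
    · rw [← mul_assoc, hElmBEm, zero_mul]

end SSSAux

namespace SSSAux

open Matrix

variable {n : ℕ}

theorem mainInd {B : Mat n} (hB : TotSSS B) (hA : TheAssumption B) :
    ∀ s : ℕ, P2s B s ∧ CLs B s := by
  intro s
  induction s with
  | zero => exact ⟨P2_zero B, CL_zero B⟩
  | succ s ih => exact ⟨P2_step hB hA ih.1 ih.2, CL_step hB hA ih.1 ih.2⟩

end SSSAux

open SSSAux in
/-- under the Assumption, every `G`-matrix is row sign-coherent. -/
theorem G_row_sign_coherent' {n : ℕ} (B : Matrix (Fin n) (Fin n) ℤ) (hB : TotSSS B)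
    (hA : TheAssumption B) (w : List (Fin n)) (i : Fin n) :
    (∃ j, Gmat B w i j ≠ 0) ∧
    ((∀ j, 0 ≤ Gmat B w i j) ∨ (∀ j, Gmat B w i j ≤ 0)) := by
  have hP2 : Gmat B w = (Cmat ((Bmat B w)ᵀ) w.reverse)ᵀ :=
    (mainInd hB hA w.length).1 B (InCl_self B) w rfl
  obtain ⟨ε, hc, _⟩ :=
    pair_sign hA (InCl_transpose (InCl_Bmat (InCl_self B) w)) w.reverse i
  constructor
  · obtain ⟨j0, hj0⟩ := hc.1
    refine ⟨j0, ?_⟩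
    rw [hP2, transpose_apply]
    exact hj0
  · rcases hc.2 with ⟨_, hpos⟩ | ⟨_, hneg⟩
    · left
      intro j
      rw [hP2, transpose_apply]
      exact hpos j
    · right
      intro j
      rw [hP2, transpose_apply]
      exact hneg j
/-- under the Assumption, every `G`-matrix is row sign-coherent. -/
theorem G_row_sign_coherent {n : ℕ} (B : Matrix (Fin n) (Fin n) ℤ) (hB : TotSSS B)
    (hA : TheAssumption B) (w : List (Fin n)) (i : Fin n) :
    (∃ j, Gmat B w i j ≠ 0) ∧
    ((∀ j, 0 ≤ Gmat B w i j) ∨ (∀ j, Gmat B w i j ≤ 0)) := by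
  exact G_row_sign_coherent' B hB hA w i
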